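/- Approximate anti-commutativity: let ε ≥ 0 and suppose the six Hermitian involutions satisfy the nine commutation relations and the unit vector Ψ satisfies the ideal expectations within error ε: re⟪Ψ, A₁₂(A₃₄(A₅₆ Ψ))⟫ ≥ 1−ε, re⟪Ψ, A₄₅(A₁₆(A₂₃ Ψ))⟫ ≥ 1−ε, re⟪Ψ, A₁₂(A₄₅ Ψ)⟫ ≥ 1−ε, re⟪Ψ, A₃₄(A₁₆ Ψ)⟫ ≥ 1−ε, −re⟪Ψ, A₅₆(A₂₃ Ψ)⟫ ≥ 1−ε. Then for every adjacent pair (A_r, A_s) among (A₁₂,A₁₆), (A₁₂,A₂₃), (A₂₃,A₃₄), (A₃₄,A₄₅), (A₄₅,A₅₆), (A₅₆,A₁₆), one has ‖A_r(A_s Ψ) + A_s(A_r Ψ)‖ ≤ 5·√(2ε). -/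
import Mathlib


open scoped InnerProductSpace

section Aux

variable {H : Type*} [NormedAddCommGroup H] [InnerProductSpace ℂ H] [CompleteSpace H]

lemma aux_norm_invol (A : H →L[ℂ] H) (hA : IsSelfAdjoint A) (hi : A ∘L A = 1) (x : H) :
    ‖A x‖ = ‖x‖ := by
  have h2 : A (A x) = x := by
    have := congrArg (fun T : H →L[ℂ] H => T x) hi
    simpa using this
  have hin : ⟪A x, A x⟫_ℂ = ⟪x, x⟫_ℂ := by
    have h3 := hA.isSymmetric x (A x)
    simp only [ContinuousLinearMap.coe_coe] at h3
    rw [h3, h2]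
  rw [norm_eq_sqrt_re_inner (𝕜 := ℂ) (A x), norm_eq_sqrt_re_inner (𝕜 := ℂ) x, hin]

lemma aux_close {ε : ℝ} (hε : 0 ≤ ε) (x y : H) (hx : ‖x‖ = 1) (hy : ‖y‖ = 1)
    (h : 1 - ε ≤ RCLike.re ⟪x, y⟫_ℂ) : ‖y - x‖ ≤ Real.sqrt (2 * ε) := by
  have hsq : ‖x - y‖ ^ 2 = ‖x‖ ^ 2 - 2 * RCLike.re ⟪x, y⟫_ℂ + ‖y‖ ^ 2 :=
    norm_sub_sq (𝕜 := ℂ) x y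
  have h1 : ‖x - y‖ ^ 2 ≤ 2 * ε := by rw [hsq, hx, hy]; nlinarith
  have h2 : ‖y - x‖ = Real.sqrt (‖x - y‖ ^ 2) := by
    rw [Real.sqrt_sq (norm_nonneg _), norm_sub_rev]
  rw [h2]
  exact Real.sqrt_le_sqrt h1

end Aux

/-- **Approximate anti-commutativity.** If the unit state `Ψ` satisfies the ideal
expectations within error `ε`, then for every adjacent pair of parity operators
`(A_r, A_s)`, `‖A_r (A_s Ψ) + A_s (A_r Ψ)‖ ≤ 5 √(2 ε)`. -/
theorem approximate_anticommutativity
    {H : Type*} [NormedAddCommGroup H] [InnerProductSpace ℂ H] [CompleteSpace H]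
    (A₁₂ A₃₄ A₅₆ A₄₅ A₁₆ A₂₃ : H →L[ℂ] H)
    (h₁₂ : IsSelfAdjoint A₁₂) (h₃₄ : IsSelfAdjoint A₃₄) (h₅₆ : IsSelfAdjoint A₅₆)
    (h₄₅ : IsSelfAdjoint A₄₅) (h₁₆ : IsSelfAdjoint A₁₆) (h₂₃ : IsSelfAdjoint A₂₃)
    (hi₁₂ : A₁₂ ∘L A₁₂ = 1) (hi₃₄ : A₃₄ ∘L A₃₄ = 1) (hi₅₆ : A₅₆ ∘L A₅₆ = 1)
    (hi₄₅ : A₄₅ ∘L A₄₅ = 1) (hi₁₆ : A₁₆ ∘L A₁₆ = 1) (hi₂₃ : A₂₃ ∘L A₂₃ = 1)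
    (c₁ : A₁₂ ∘L A₃₄ = A₃₄ ∘L A₁₂) (c₂ : A₁₂ ∘L A₅₆ = A₅₆ ∘L A₁₂)
    (c₃ : A₃₄ ∘L A₅₆ = A₅₆ ∘L A₃₄) (c₄ : A₄₅ ∘L A₁₆ = A₁₆ ∘L A₄₅)
    (c₅ : A₄₅ ∘L A₂₃ = A₂₃ ∘L A₄₅) (c₆ : A₁₆ ∘L A₂₃ = A₂₃ ∘L A₁₆)
    (c₇ : A₁₂ ∘L A₄₅ = A₄₅ ∘L A₁₂) (c₈ : A₃₄ ∘L A₁₆ = A₁₆ ∘L A₃₄)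
    (c₉ : A₅₆ ∘L A₂₃ = A₂₃ ∘L A₅₆)
    (Ψ : H) (hΨ : ‖Ψ‖ = 1) (ε : ℝ) (hε : 0 ≤ ε)
    -- ideal expectations within error ε
    (e₁ : 1 - ε ≤ RCLike.re ⟪Ψ, A₁₂ (A₃₄ (A₅₆ Ψ))⟫_ℂ)
    (e₂ : 1 - ε ≤ RCLike.re ⟪Ψ, A₄₅ (A₁₆ (A₂₃ Ψ))⟫_ℂ)
    (e₃ : 1 - ε ≤ RCLike.re ⟪Ψ, A₁₂ (A₄₅ Ψ)⟫_ℂ)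
    (e₄ : 1 - ε ≤ RCLike.re ⟪Ψ, A₃₄ (A₁₆ Ψ)⟫_ℂ)
    (e₅ : 1 - ε ≤ -RCLike.re ⟪Ψ, A₅₆ (A₂₃ Ψ)⟫_ℂ) :
    ‖A₁₂ (A₁₆ Ψ) + A₁₆ (A₁₂ Ψ)‖ ≤ 5 * Real.sqrt (2 * ε) ∧
    ‖A₁₂ (A₂₃ Ψ) + A₂₃ (A₁₂ Ψ)‖ ≤ 5 * Real.sqrt (2 * ε) ∧
    ‖A₂₃ (A₃₄ Ψ) + A₃₄ (A₂₃ Ψ)‖ ≤ 5 * Real.sqrt (2 * ε) ∧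
    ‖A₃₄ (A₄₅ Ψ) + A₄₅ (A₃₄ Ψ)‖ ≤ 5 * Real.sqrt (2 * ε) ∧
    ‖A₄₅ (A₅₆ Ψ) + A₅₆ (A₄₅ Ψ)‖ ≤ 5 * Real.sqrt (2 * ε) ∧
    ‖A₅₆ (A₁₆ Ψ) + A₁₆ (A₅₆ Ψ)‖ ≤ 5 * Real.sqrt (2 * ε) := by
  set δ := Real.sqrt (2 * ε) with hδ
  -- norm preservation
  have n12 := aux_norm_invol A₁₂ h₁₂ hi₁₂
  have n34 := aux_norm_invol A₃₄ h₃₄ hi₃₄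
  have n56 := aux_norm_invol A₅₆ h₅₆ hi₅₆
  have n45 := aux_norm_invol A₄₅ h₄₅ hi₄₅
  have n16 := aux_norm_invol A₁₆ h₁₆ hi₁₆
  have n23 := aux_norm_invol A₂₃ h₂₃ hi₂₃
  -- pointwise involutions
  have i12 : ∀ x, A₁₂ (A₁₂ x) = x := fun x => by
    have := congrArg (fun T : H →L[ℂ] H => T x) hi₁₂; simpa using this
  have i34 : ∀ x, A₃₄ (A₃₄ x) = x := fun x => by
    have := congrArg (fun T : H →L[ℂ] H => T x) hi₃₄; simpa using this
  have i56 : ∀ x, A₅₆ (A₅₆ x) = x := fun x => by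
    have := congrArg (fun T : H →L[ℂ] H => T x) hi₅₆; simpa using this
  have i45 : ∀ x, A₄₅ (A₄₅ x) = x := fun x => by
    have := congrArg (fun T : H →L[ℂ] H => T x) hi₄₅; simpa using this
  have i16 : ∀ x, A₁₆ (A₁₆ x) = x := fun x => by
    have := congrArg (fun T : H →L[ℂ] H => T x) hi₁₆; simpa using this
  have i23 : ∀ x, A₂₃ (A₂₃ x) = x := fun x => by
    have := congrArg (fun T : H →L[ℂ] H => T x) hi₂₃; simpa using this
  -- pointwise commutations
  have p₁ : ∀ x, A₁₂ (A₃₄ x) = A₃₄ (A₁₂ x) := fun x => by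
    have := congrArg (fun T : H →L[ℂ] H => T x) c₁; simpa using this
  have p₂ : ∀ x, A₁₂ (A₅₆ x) = A₅₆ (A₁₂ x) := fun x => by
    have := congrArg (fun T : H →L[ℂ] H => T x) c₂; simpa using this
  have p₃ : ∀ x, A₃₄ (A₅₆ x) = A₅₆ (A₃₄ x) := fun x => by
    have := congrArg (fun T : H →L[ℂ] H => T x) c₃; simpa using this
  have p₄ : ∀ x, A₄₅ (A₁₆ x) = A₁₆ (A₄₅ x) := fun x => by
    have := congrArg (fun T : H →L[ℂ] H => T x) c₄; simpa using this
  have p₅ : ∀ x, A₄₅ (A₂₃ x) = A₂₃ (A₄₅ x) := fun x => by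
    have := congrArg (fun T : H →L[ℂ] H => T x) c₅; simpa using this
  have p₆ : ∀ x, A₁₆ (A₂₃ x) = A₂₃ (A₁₆ x) := fun x => by
    have := congrArg (fun T : H →L[ℂ] H => T x) c₆; simpa using this
  -- basic closeness facts
  have B1 : ‖A₁₂ (A₃₄ (A₅₆ Ψ)) - Ψ‖ ≤ δ := by
    refine aux_close hε Ψ _ hΨ ?_ e₁
    rw [n12, n34, n56, hΨ]
  have B2 : ‖A₄₅ (A₁₆ (A₂₃ Ψ)) - Ψ‖ ≤ δ := by
    refine aux_close hε Ψ _ hΨ ?_ e₂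
    rw [n45, n16, n23, hΨ]
  have B3 : ‖A₁₂ (A₄₅ Ψ) - Ψ‖ ≤ δ := by
    refine aux_close hε Ψ _ hΨ ?_ e₃
    rw [n12, n45, hΨ]
  have B4 : ‖A₃₄ (A₁₆ Ψ) - Ψ‖ ≤ δ := by
    refine aux_close hε Ψ _ hΨ ?_ e₄
    rw [n34, n16, hΨ]
  have B5 : ‖A₅₆ (A₂₃ Ψ) + Ψ‖ ≤ δ := by
    have h5 : ‖(-(A₅₆ (A₂₃ Ψ))) - Ψ‖ ≤ δ := by
      refine aux_close hε Ψ _ hΨ ?_ ?_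
      · rw [norm_neg, n56, n23, hΨ]
      · rw [inner_neg_right]
        simpa using e₅
    calc ‖A₅₆ (A₂₃ Ψ) + Ψ‖ = ‖(-(A₅₆ (A₂₃ Ψ))) - Ψ‖ := by
          rw [← norm_neg]; congr 1; abel
      _ ≤ δ := h5
  -- transfer along isometries
  have step12 : ∀ a b : H, ‖a - b‖ ≤ δ → ‖A₁₂ a - A₁₂ b‖ ≤ δ := fun a b h => by
    rw [← map_sub, n12]; exact h
  have step34 : ∀ a b : H, ‖a - b‖ ≤ δ → ‖A₃₄ a - A₃₄ b‖ ≤ δ := fun a b h => by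
    rw [← map_sub, n34]; exact h
  have step56 : ∀ a b : H, ‖a - b‖ ≤ δ → ‖A₅₆ a - A₅₆ b‖ ≤ δ := fun a b h => by
    rw [← map_sub, n56]; exact h
  have step45 : ∀ a b : H, ‖a - b‖ ≤ δ → ‖A₄₅ a - A₄₅ b‖ ≤ δ := fun a b h => by
    rw [← map_sub, n45]; exact h
  have step16 : ∀ a b : H, ‖a - b‖ ≤ δ → ‖A₁₆ a - A₁₆ b‖ ≤ δ := fun a b h => by
    rw [← map_sub, n16]; exact h
  have step23 : ∀ a b : H, ‖a - b‖ ≤ δ → ‖A₂₃ a - A₂₃ b‖ ≤ δ := fun a b h => by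
    rw [← map_sub, n23]; exact h
  -- derived links (each ≤ δ)
  have L4 : ‖A₃₄ (A₅₆ Ψ) - A₁₂ Ψ‖ ≤ δ := by
    have := step12 _ _ B1
    rwa [i12] at this
  have L5 : ‖A₁₂ (A₃₄ Ψ) - A₅₆ Ψ‖ ≤ δ := by
    have := step34 _ _ L4
    rw [i34, ← p₁] at this
    rwa [norm_sub_rev] at this
  have L6 : ‖A₁₂ (A₅₆ Ψ) - A₃₄ Ψ‖ ≤ δ := by
    have := step12 _ _ L5
    rw [i12] at this
    rwa [norm_sub_rev] at this
  have L7 : ‖A₁₆ (A₂₃ Ψ) - A₄₅ Ψ‖ ≤ δ := by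
    have := step45 _ _ B2
    rwa [i45] at this
  have L8 : ‖A₂₃ Ψ - A₁₆ (A₄₅ Ψ)‖ ≤ δ := by
    have := step16 _ _ L7
    rwa [i16] at this
  have L9 : ‖A₄₅ (A₂₃ Ψ) - A₁₆ Ψ‖ ≤ δ := by
    have := step45 _ _ L8
    rwa [p₄, i45] at this
  have L1 : ‖A₁₆ Ψ - A₃₄ Ψ‖ ≤ δ := by
    have := step34 _ _ B4
    rwa [i34] at this
  have L2 : ‖A₄₅ Ψ - A₁₂ Ψ‖ ≤ δ := by
    have := step12 _ _ B3
    rwa [i12] at this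
  have L3 : ‖A₂₃ Ψ + A₅₆ Ψ‖ ≤ δ := by
    have h := B5
    have : ‖A₅₆ (A₅₆ (A₂₃ Ψ) + Ψ)‖ ≤ δ := by rwa [n56]
    rwa [map_add, i56] at this
  -- triangle helpers
  have key : ∀ u v a b : H, ‖u + v‖ ≤ ‖u - a‖ + ‖v - b‖ + ‖a + b‖ := by
    intro u v a b
    have he : u + v = (u - a) + ((v - b) + (a + b)) := by abel
    rw [he]
    calc ‖(u - a) + ((v - b) + (a + b))‖ ≤ ‖u - a‖ + ‖(v - b) + (a + b)‖ :=
          norm_add_le _ _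
      _ ≤ ‖u - a‖ + (‖v - b‖ + ‖a + b‖) := by
          gcongr; exact norm_add_le _ _
      _ = ‖u - a‖ + ‖v - b‖ + ‖a + b‖ := by ring
  have t2 : ∀ u m a : H, ‖u - m‖ ≤ δ → ‖m - a‖ ≤ δ → ‖u - a‖ ≤ 2 * δ := by
    intro u m a h1 h2
    have := dist_triangle u m a
    simp only [dist_eq_norm] at this
    linarith
  have t3 : ∀ u m n a : H, ‖u - m‖ ≤ δ → ‖m - n‖ ≤ δ → ‖n - a‖ ≤ δ → ‖u - a‖ ≤ 3 * δ := by
    intro u m n a h1 h2 h3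
    have := dist_triangle4 u m n a
    simp only [dist_eq_norm] at this
    linarith
  refine ⟨?_, ?_, ?_, ?_, ?_, ?_⟩
  · -- (A₁₂, A₁₆): u ≈₂ A₅₆Ψ, v ≈₂ A₂₃Ψ, ‖A₅₆Ψ + A₂₃Ψ‖ ≤ δ
    have hu : ‖A₁₂ (A₁₆ Ψ) - A₅₆ Ψ‖ ≤ 2 * δ :=
      t2 _ (A₁₂ (A₃₄ Ψ)) _ (step12 _ _ L1) L5
    have hv : ‖A₁₆ (A₁₂ Ψ) - A₂₃ Ψ‖ ≤ 2 * δ := by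
      refine t2 _ (A₁₆ (A₄₅ Ψ)) _ ?_ ?_
      · have := step16 _ _ L2; rwa [norm_sub_rev] at this
      · rwa [norm_sub_rev] at L8
    have hab : ‖A₅₆ Ψ + A₂₃ Ψ‖ ≤ δ := by rwa [add_comm] at L3
    calc ‖A₁₂ (A₁₆ Ψ) + A₁₆ (A₁₂ Ψ)‖
        ≤ ‖A₁₂ (A₁₆ Ψ) - A₅₆ Ψ‖ + ‖A₁₆ (A₁₂ Ψ) - A₂₃ Ψ‖ + ‖A₅₆ Ψ + A₂₃ Ψ‖ := key _ _ _ _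
      _ ≤ 2 * δ + (2 * δ) + δ := by gcongr
      _ = 5 * δ := by ring
  · -- (A₁₂, A₂₃): u ≈₃ -A₁₆Ψ, v ≈₂ A₁₆Ψ
    have hu : ‖A₁₂ (A₂₃ Ψ) - (-(A₁₆ Ψ))‖ ≤ 3 * δ := by
      refine t3 _ (-(A₁₂ (A₅₆ Ψ))) (-(A₃₄ Ψ)) _ ?_ ?_ ?_
      · have h : ‖A₁₂ (A₂₃ Ψ + A₅₆ Ψ)‖ ≤ δ := by rwa [n12]
        rw [map_add] at h
        calc ‖A₁₂ (A₂₃ Ψ) - (-(A₁₂ (A₅₆ Ψ)))‖ = ‖A₁₂ (A₂₃ Ψ) + A₁₂ (A₅₆ Ψ)‖ := by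
              rw [sub_neg_eq_add]
          _ ≤ δ := h
      · rw [← norm_neg]
        have he : -((-(A₁₂ (A₅₆ Ψ))) - (-(A₃₄ Ψ))) = A₁₂ (A₅₆ Ψ) - A₃₄ Ψ := by abel
        rw [he]; exact L6
      · rw [← norm_neg]
        have he : -((-(A₃₄ Ψ)) - (-(A₁₆ Ψ))) = A₃₄ Ψ - A₁₆ Ψ := by abel
        rw [he, norm_sub_rev]; exact L1
    have hv : ‖A₂₃ (A₁₂ Ψ) - A₁₆ Ψ‖ ≤ 2 * δ := by
      refine t2 _ (A₂₃ (A₄₅ Ψ)) _ ?_ ?_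
      · have := step23 _ _ L2; rwa [norm_sub_rev] at this
      · rw [← p₅]; exact L9
    have hab : ‖(-(A₁₆ Ψ)) + A₁₆ Ψ‖ ≤ 0 := by simp
    calc ‖A₁₂ (A₂₃ Ψ) + A₂₃ (A₁₂ Ψ)‖
        ≤ ‖A₁₂ (A₂₃ Ψ) - (-(A₁₆ Ψ))‖ + ‖A₂₃ (A₁₂ Ψ) - A₁₆ Ψ‖ + ‖(-(A₁₆ Ψ)) + A₁₆ Ψ‖ :=
          key _ _ _ _
      _ ≤ 3 * δ + 2 * δ + 0 := by gcongr
      _ = 5 * δ := by ring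
  · -- (A₂₃, A₃₄): u ≈₃ A₁₂Ψ, v ≈₂ -A₁₂Ψ
    have hu : ‖A₂₃ (A₃₄ Ψ) - A₁₂ Ψ‖ ≤ 3 * δ := by
      refine t3 _ (A₂₃ (A₁₆ Ψ)) (A₄₅ Ψ) _ ?_ ?_ L2
      · have := step23 _ _ L1; rwa [norm_sub_rev] at this
      · rw [← p₆]; exact L7
    have hv : ‖A₃₄ (A₂₃ Ψ) - (-(A₁₂ Ψ))‖ ≤ 2 * δ := by
      refine t2 _ (-(A₃₄ (A₅₆ Ψ))) _ ?_ ?_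
      · have h : ‖A₃₄ (A₂₃ Ψ + A₅₆ Ψ)‖ ≤ δ := by rwa [n34]
        rw [map_add] at h
        rw [sub_neg_eq_add]; exact h
      · rw [← norm_neg]
        have he : -((-(A₃₄ (A₅₆ Ψ))) - (-(A₁₂ Ψ))) = A₃₄ (A₅₆ Ψ) - A₁₂ Ψ := by abel
        rw [he]; exact L4
    have hab : ‖A₁₂ Ψ + (-(A₁₂ Ψ))‖ ≤ 0 := by simp
    calc ‖A₂₃ (A₃₄ Ψ) + A₃₄ (A₂₃ Ψ)‖
        ≤ ‖A₂₃ (A₃₄ Ψ) - A₁₂ Ψ‖ + ‖A₃₄ (A₂₃ Ψ) - (-(A₁₂ Ψ))‖ + ‖A₁₂ Ψ + (-(A₁₂ Ψ))‖ :=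
          key _ _ _ _
      _ ≤ 3 * δ + 2 * δ + 0 := by gcongr
      _ = 5 * δ := by ring
  · -- (A₃₄, A₄₅): u ≈₂ A₅₆Ψ, v ≈₃ -A₅₆Ψ
    have hu : ‖A₃₄ (A₄₅ Ψ) - A₅₆ Ψ‖ ≤ 2 * δ := by
      refine t2 _ (A₃₄ (A₁₂ Ψ)) _ (step34 _ _ L2) ?_
      rw [← p₁]; exact L5
    have hv : ‖A₄₅ (A₃₄ Ψ) - (-(A₅₆ Ψ))‖ ≤ 3 * δ := by
      refine t3 _ (A₄₅ (A₁₆ Ψ)) (A₂₃ Ψ) _ ?_ ?_ ?_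
      · have := step45 _ _ L1; rwa [norm_sub_rev] at this
      · rw [p₄]; rwa [norm_sub_rev] at L8
      · rw [sub_neg_eq_add]; exact L3
    have hab : ‖A₅₆ Ψ + (-(A₅₆ Ψ))‖ ≤ 0 := by simp
    calc ‖A₃₄ (A₄₅ Ψ) + A₄₅ (A₃₄ Ψ)‖
        ≤ ‖A₃₄ (A₄₅ Ψ) - A₅₆ Ψ‖ + ‖A₄₅ (A₃₄ Ψ) - (-(A₅₆ Ψ))‖ + ‖A₅₆ Ψ + (-(A₅₆ Ψ))‖ :=
          key _ _ _ _
      _ ≤ 2 * δ + 3 * δ + 0 := by gcongr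
      _ = 5 * δ := by ring
  · -- (A₄₅, A₅₆): u ≈₃ -A₃₄Ψ, v ≈₂ A₃₄Ψ
    have hu : ‖A₄₅ (A₅₆ Ψ) - (-(A₃₄ Ψ))‖ ≤ 3 * δ := by
      refine t3 _ (-(A₄₅ (A₂₃ Ψ))) (-(A₁₆ Ψ)) _ ?_ ?_ ?_
      · have h : ‖A₄₅ (A₂₃ Ψ + A₅₆ Ψ)‖ ≤ δ := by rwa [n45]
        rw [map_add] at h
        rw [sub_neg_eq_add, add_comm]; exact h
      · rw [← norm_neg]
        have he : -((-(A₄₅ (A₂₃ Ψ))) - (-(A₁₆ Ψ))) = A₄₅ (A₂₃ Ψ) - A₁₆ Ψ := by abel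
        rw [he]; exact L9
      · rw [← norm_neg]
        have he : -((-(A₁₆ Ψ)) - (-(A₃₄ Ψ))) = A₁₆ Ψ - A₃₄ Ψ := by abel
        rw [he]; exact L1
    have hv : ‖A₅₆ (A₄₅ Ψ) - A₃₄ Ψ‖ ≤ 2 * δ := by
      refine t2 _ (A₅₆ (A₁₂ Ψ)) _ (step56 _ _ L2) ?_
      rw [← p₂]; exact L6
    have hab : ‖(-(A₃₄ Ψ)) + A₃₄ Ψ‖ ≤ 0 := by simp
    calc ‖A₄₅ (A₅₆ Ψ) + A₅₆ (A₄₅ Ψ)‖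
        ≤ ‖A₄₅ (A₅₆ Ψ) - (-(A₃₄ Ψ))‖ + ‖A₅₆ (A₄₅ Ψ) - A₃₄ Ψ‖ + ‖(-(A₃₄ Ψ)) + A₃₄ Ψ‖ :=
          key _ _ _ _
      _ ≤ 3 * δ + 2 * δ + 0 := by gcongr
      _ = 5 * δ := by ring
  · -- (A₅₆, A₁₆): u ≈₃ A₄₅Ψ, v ≈₂ -A₄₅Ψ
    have hu : ‖A₅₆ (A₁₆ Ψ) - A₄₅ Ψ‖ ≤ 3 * δ := by
      refine t3 _ (A₅₆ (A₃₄ Ψ)) (A₁₂ Ψ) _ (step56 _ _ L1) ?_ ?_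
      · rw [← p₃]; exact L4
      · rwa [norm_sub_rev] at L2
    have hv : ‖A₁₆ (A₅₆ Ψ) - (-(A₄₅ Ψ))‖ ≤ 2 * δ := by
      refine t2 _ (-(A₁₆ (A₂₃ Ψ))) _ ?_ ?_
      · have h : ‖A₁₆ (A₂₃ Ψ + A₅₆ Ψ)‖ ≤ δ := by rwa [n16]
        rw [map_add] at h
        rw [sub_neg_eq_add, add_comm]; exact h
      · rw [← norm_neg]
        have he : -((-(A₁₆ (A₂₃ Ψ))) - (-(A₄₅ Ψ))) = A₁₆ (A₂₃ Ψ) - A₄₅ Ψ := by abel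
        rw [he]; exact L7
    have hab : ‖A₄₅ Ψ + (-(A₄₅ Ψ))‖ ≤ 0 := by simp
    calc ‖A₅₆ (A₁₆ Ψ) + A₁₆ (A₅₆ Ψ)‖
        ≤ ‖A₅₆ (A₁₆ Ψ) - A₄₅ Ψ‖ + ‖A₁₆ (A₅₆ Ψ) - (-(A₄₅ Ψ))‖ + ‖A₄₅ Ψ + (-(A₄₅ Ψ))‖ :=
          key _ _ _ _
      _ ≤ 3 * δ + 2 * δ + 0 := by gcongr
      _ = 5 * δ := by ring
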